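/- Let V₀ be a finite-dimensional Euclidean real vector space with complexification V. Define the Paley–Wiener space PW(V) to consist of holomorphic functions f : V → C such that sup_{‖Re λ‖ ≤ k} (1+|λ|)^N |f(λ)| < ∞ for all natural numbers N and k. If f ∈ PW(V), p is a nonzero complex polynomial on V, and f/p extends to a holomorphic function h on V, then h ∈ PW(V). -/

import Mathlib

noncomputable section

open Polynomial Metric

open Polynomial Metric

lemma multiset_prod_diff (s : Multiset ℂ) :
    Differentiable ℂ (fun t : ℂ => (s.map (fun w => t - w)).prod) := by
  induction s using Multiset.induction with
  | empty => simp [differentiable_const]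
  | cons w s ih =>
    simp only [Multiset.map_cons, Multiset.prod_cons]
    exact (differentiable_id.sub_const w).mul ih

lemma div_bound_one (F G : ℂ → ℂ) (hG : Differentiable ℂ G) (w : ℂ)
    (hFG : ∀ t, F t = (t - w) * G t) (r M : ℝ) (hr : 0 < r)
    (hM : ∀ ζ : ℂ, ‖ζ‖ ≤ 3 * r → ‖F ζ‖ ≤ M) :
    ∀ z : ℂ, ‖z‖ ≤ r → ‖G z‖ ≤ M / r := by
  have hM0 : 0 ≤ M := le_trans (norm_nonneg _) (hM 0 (by simp; positivity))
  have key : ∀ ζ : ℂ, ‖ζ‖ ≤ 3 * r → r ≤ ‖ζ - w‖ → ‖G ζ‖ ≤ M / r := by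
    intro ζ h3 hd
    have hne : ζ ≠ w := by
      intro e; rw [e, sub_self, norm_zero] at hd; linarith
    have : G ζ = F ζ / (ζ - w) := by
      rw [hFG ζ, mul_div_cancel_left₀]
      exact sub_ne_zero.mpr hne
    rw [this, norm_div]
    exact div_le_div₀ hM0 (hM ζ h3) hr hd
  intro z hz
  by_cases hw : ‖w‖ ≤ 2 * r
  · refine Complex.norm_le_of_forall_mem_frontier_norm_le (isBounded_ball (x := (0:ℂ)) (r := 3*r)) hG.diffContOnCl ?_ ?_
    · intro ζ hζ
      rw [frontier_ball _ (by positivity)] at hζ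
      have hζ' : ‖ζ‖ = 3 * r := by simpa [mem_sphere_iff_norm] using hζ
      exact key ζ hζ'.le (by
        calc r = 3*r - 2*r := by ring
        _ ≤ ‖ζ‖ - ‖w‖ := by rw [hζ']; linarith
        _ ≤ ‖ζ - w‖ := norm_sub_norm_le _ _)
    · rw [closure_ball _ (by positivity : (3:ℝ)*r ≠ 0)]
      simpa [mem_closedBall_iff_norm] using hz.trans (by linarith)
  · push_neg at hw
    exact key z (hz.trans (by linarith)) (by
      calc r ≤ 2*r - r := by linarith
      _ ≤ ‖w‖ - ‖z‖ := by linarith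
      _ ≤ ‖w - z‖ := norm_sub_norm_le _ _
      _ = ‖z - w‖ := norm_sub_rev _ _)

lemma div_bound_multiset (s : Multiset ℂ) : ∀ (F G : ℂ → ℂ), Differentiable ℂ G →
    (∀ t, F t = (s.map (fun w => t - w)).prod * G t) → ∀ (r M : ℝ), 0 < r →
    (∀ ζ : ℂ, ‖ζ‖ ≤ 3 ^ Multiset.card s * r → ‖F ζ‖ ≤ M) →
    ∀ z : ℂ, ‖z‖ ≤ r → ‖G z‖ ≤ M / r ^ Multiset.card s := by
  induction s using Multiset.induction with
  | empty =>
    intro F G hG hFG r M hr hM z hz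
    simp only [Multiset.card_zero, pow_zero, div_one]
    have := hM z (by simpa using hz)
    rwa [hFG z, Multiset.map_zero, Multiset.prod_zero, one_mul] at this
  | cons w s ih =>
    intro F G hG hFG r M hr hM z hz
    have hM0 : 0 ≤ M := le_trans (norm_nonneg _) (hM 0 (by simp; positivity))
    set G₁ : ℂ → ℂ := fun t => (s.map (fun w => t - w)).prod * G t with hG₁
    have hG₁d : Differentiable ℂ G₁ := (multiset_prod_diff s).mul hG
    have hFG₁ : ∀ t, F t = (t - w) * G₁ t := by
      intro t; rw [hFG t]; simp [G₁, Multiset.map_cons, Multiset.prod_cons, mul_assoc]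
    have h1 : ∀ ζ : ℂ, ‖ζ‖ ≤ 3 ^ Multiset.card s * r → ‖G₁ ζ‖ ≤ M / (3 ^ Multiset.card s * r) := by
      apply div_bound_one F G₁ hG₁d w hFG₁ _ M (by positivity)
      intro ζ hζ
      apply hM
      calc ‖ζ‖ ≤ 3 * (3 ^ Multiset.card s * r) := hζ
      _ = 3 ^ Multiset.card (w ::ₘ s) * r := by rw [Multiset.card_cons, pow_succ]; ring
    have h2 := ih G₁ G hG (fun t => rfl) r (M / (3 ^ Multiset.card s * r)) hr
      (fun ζ hζ => h1 ζ hζ) z hz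
    calc ‖G z‖ ≤ M / (3 ^ Multiset.card s * r) / r ^ Multiset.card s := h2
    _ ≤ M / r ^ Multiset.card (w ::ₘ s) := by
        rw [Multiset.card_cons, div_div, pow_succ]
        apply div_le_div₀ hM0 le_rfl (by positivity)
        have h3 : (1:ℝ) ≤ 3 ^ Multiset.card s := one_le_pow₀ (by norm_num)
        calc r ^ Multiset.card s * r = (r ^ Multiset.card s * r) * 1 := by ring
        _ ≤ (r ^ Multiset.card s * r) * 3 ^ Multiset.card s := by
            apply mul_le_mul_of_nonneg_left h3; positivity
        _ = 3 ^ Multiset.card s * r * r ^ Multiset.card s := by ring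


lemma coeff_prod' {ι : Type*} (s : Finset ι) (f : ι → Polynomial ℂ) (m : ι → ℕ)
    (h : ∀ i ∈ s, (f i).natDegree ≤ m i) :
    (∏ i ∈ s, f i).coeff (∑ i ∈ s, m i) = ∏ i ∈ s, (f i).coeff (m i) := by
  induction s using Finset.cons_induction with
  | empty => simp
  | cons i s hi ih =>
    rw [Finset.prod_cons, Finset.sum_cons, Finset.prod_cons,
      Polynomial.coeff_mul_add_eq_of_natDegree_le (h i (Finset.mem_cons_self i s))
        ((Polynomial.natDegree_prod_le _ _).trans
          (Finset.sum_le_sum fun j hj => h j (Finset.mem_cons_of_mem hj))),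
      ih (fun j hj => h j (Finset.mem_cons_of_mem hj))]

section line
variable {n : ℕ} (l v : Fin n → ℂ)

/-- the substitution xᵢ ↦ lᵢ + vᵢ t -/
noncomputable def lineMap' (l v : Fin n → ℂ) : Fin n → Polynomial ℂ :=
  fun i => Polynomial.C (l i) + Polynomial.C (v i) * Polynomial.X

lemma lineMap'_def (i : Fin n) :
    lineMap' l v i = Polynomial.C (l i) + Polynomial.C (v i) * Polynomial.X := rfl

lemma lineMap'_natDegree (i : Fin n) : (lineMap' l v i).natDegree ≤ 1 := by
  apply (Polynomial.natDegree_add_le _ _).trans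
  simp [Polynomial.natDegree_C]
  exact (Polynomial.natDegree_C_mul_le _ _).trans (by simp)

lemma lineMap'_coeff_one (i : Fin n) : (lineMap' l v i).coeff 1 = v i := by
  simp [lineMap', Polynomial.coeff_C]

lemma term_natDegree_le (m : Fin n →₀ ℕ) (c : ℂ) :
    ((MvPolynomial.aeval (lineMap' l v)) (MvPolynomial.monomial m c)).natDegree
      ≤ m.sum fun _ e => e := by
  rw [MvPolynomial.aeval_monomial]
  apply (Polynomial.natDegree_mul_le).trans
  have h1 : (algebraMap ℂ (Polynomial ℂ) c).natDegree = 0 := Polynomial.natDegree_C _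
  rw [h1, zero_add]
  rw [Finsupp.prod, Finsupp.sum]
  apply (Polynomial.natDegree_prod_le _ _).trans
  apply Finset.sum_le_sum
  intro i _
  calc ((lineMap' l v i) ^ m i).natDegree ≤ m i * (lineMap' l v i).natDegree :=
        Polynomial.natDegree_pow_le
  _ ≤ m i * 1 := Nat.mul_le_mul_left _ (lineMap'_natDegree l v i)
  _ = m i := Nat.mul_one _

lemma term_coeff_top (m : Fin n →₀ ℕ) (c : ℂ) :
    ((MvPolynomial.aeval (lineMap' l v)) (MvPolynomial.monomial m c)).coeff (m.sum fun _ e => e)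
      = c * m.prod fun i e => v i ^ e := by
  rw [MvPolynomial.aeval_monomial]
  have h1 : (algebraMap ℂ (Polynomial ℂ) c) = Polynomial.C c := rfl
  rw [h1, Finsupp.prod, Finsupp.sum, Polynomial.coeff_C_mul]
  congr 1
  rw [coeff_prod' m.support _ m (fun i _ => by
    calc ((lineMap' l v i) ^ m i).natDegree ≤ m i * (lineMap' l v i).natDegree :=
          Polynomial.natDegree_pow_le
    _ ≤ m i * 1 := Nat.mul_le_mul_left _ (lineMap'_natDegree l v i)
    _ = m i := Nat.mul_one _)]
  rw [Finsupp.prod]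
  apply Finset.prod_congr rfl
  intro i _
  have := Polynomial.coeff_pow_of_natDegree_le (lineMap'_natDegree l v i) (m := m i)
  rw [Nat.mul_one] at this
  rw [this, lineMap'_coeff_one]

end line
section Q
variable {n : ℕ} (p : MvPolynomial (Fin n) ℂ) (l v : Fin n → ℂ)

lemma Q_natDegree_le :
    ((MvPolynomial.aeval (lineMap' l v)) p).natDegree ≤ p.totalDegree := by
  conv_lhs => rw [p.as_sum]
  rw [map_sum]
  apply Polynomial.natDegree_sum_le_of_forall_le
  intro m hm
  exact (term_natDegree_le l v m _).trans (MvPolynomial.le_totalDegree hm)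

lemma Q_coeff_top :
    ((MvPolynomial.aeval (lineMap' l v)) p).coeff p.totalDegree
      = MvPolynomial.eval v (MvPolynomial.homogeneousComponent p.totalDegree p) := by
  set d := p.totalDegree with hd'
  conv_lhs => rw [p.as_sum]
  rw [map_sum, Polynomial.finset_sum_coeff, MvPolynomial.homogeneousComponent_apply,
    map_sum, Finset.sum_filter]
  apply Finset.sum_congr rfl
  intro m hm
  have hdeg : (m.degree : ℕ) = m.sum fun _ e => e := by
    simp [Finsupp.degree, Finsupp.sum]; rfl
  by_cases hd : m.degree = p.totalDegree
  · rw [if_pos hd, hd', ← hd, hdeg, term_coeff_top, MvPolynomial.eval_monomial]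
  · rw [if_neg hd]
    apply Polynomial.coeff_eq_zero_of_natDegree_lt
    apply lt_of_le_of_lt (term_natDegree_le l v m _)
    rw [← hdeg]
    exact lt_of_le_of_ne (hdeg ▸ MvPolynomial.le_totalDegree hm) hd

lemma Q_eval (t : ℂ) :
    ((MvPolynomial.aeval (lineMap' l v)) p).eval t
      = MvPolynomial.eval (fun i => l i + t * v i) p := by
  induction p using MvPolynomial.induction_on with
  | C r => simp [MvPolynomial.aeval_C, Polynomial.algebraMap_eq]
  | add p q hp hq => rw [map_add, Polynomial.eval_add, hp, hq, map_add]
  | mul_X p i hp =>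
    rw [map_mul, Polynomial.eval_mul, hp, map_mul, MvPolynomial.aeval_X, lineMap'_def,
      MvPolynomial.eval_X, Polynomial.eval_add, Polynomial.eval_mul, Polynomial.eval_C,
      Polynomial.eval_C, Polynomial.eval_X]
    ring

lemma exists_lead_ne_zero (hp : p ≠ 0) :
    ∃ v : Fin n → ℂ,
      MvPolynomial.eval v (MvPolynomial.homogeneousComponent p.totalDegree p) ≠ 0 := by
  have hP : MvPolynomial.homogeneousComponent p.totalDegree p ≠ 0 := by
    obtain ⟨m, hm, hdm⟩ := Finset.exists_mem_eq_sup p.support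
      (MvPolynomial.support_nonempty.mpr hp) (fun m => m.sum fun _ e => e)
    intro hzero
    have := congrArg (MvPolynomial.coeff m) hzero
    rw [MvPolynomial.coeff_homogeneousComponent] at this
    have hdeg : (m.degree : ℕ) = m.sum fun _ e => e := by
      simp [Finsupp.degree, Finsupp.sum]; rfl
    rw [if_pos (by rw [hdeg, ← hdm]; rfl)] at this
    exact (MvPolynomial.mem_support_iff.mp hm) (by simpa using this)
  by_contra hcon
  push_neg at hcon
  exact hP (MvPolynomial.funext fun x => by simp [hcon x])

lemma Q_factor (q : Polynomial ℂ) (hq : q ≠ 0) (t : ℂ) :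
    q.eval t = q.leadingCoeff * ((q.roots.map (fun w => t - w)).prod) := by
  conv_lhs => rw [(IsAlgClosed.splits q).eq_prod_roots]
  rw [Polynomial.eval_mul, Polynomial.eval_C, Polynomial.eval_multiset_prod,
    Multiset.map_map]
  simp

lemma Q_roots_card (q : Polynomial ℂ) : Multiset.card q.roots = q.natDegree :=
  (Polynomial.splits_iff_card_roots.mp (IsAlgClosed.splits q))

end Q

/-- The real parts of the coordinates of a point of `ℂⁿ`. -/
def reOf {n : ℕ} (l : Fin n → ℂ) : Fin n → ℝ := fun i => (l i).re

/-- The Paley–Wiener space: entire functions rapidly decreasing on every tube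
`{λ : ‖Re λ‖ ≤ k}`. -/
def IsPW {n : ℕ} (f : (Fin n → ℂ) → ℂ) : Prop :=
  Differentiable ℂ f ∧ ∀ (N : ℕ) (k : ℝ), ∃ C : ℝ, ∀ l : Fin n → ℂ,
    ‖reOf l‖ ≤ k → (1 + ‖l‖) ^ N * ‖f l‖ ≤ C

lemma norm_reOf_le {n : ℕ} (l : Fin n → ℂ) : ‖reOf l‖ ≤ ‖l‖ := by
  rw [pi_norm_le_iff_of_nonneg (norm_nonneg l)]
  intro i
  calc ‖reOf l i‖ = |(l i).re| := rfl
  _ ≤ ‖l i‖ := Complex.abs_re_le_norm _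
  _ ≤ ‖l‖ := norm_le_pi_norm l i

/-- If `p` divides `f ∈ PW(V)` with holomorphic quotient `h`, then `h ∈ PW(V)`. -/
theorem pw_polynomial_division (n : ℕ) (f h : (Fin n → ℂ) → ℂ)
    (p : MvPolynomial (Fin n) ℂ) (hp : p ≠ 0) (hf : IsPW f)
    (hh : Differentiable ℂ h)
    (hdiv : ∀ l, f l = MvPolynomial.eval l p * h l) : IsPW h := by
  obtain ⟨hfd, hfb⟩ := hf
  refine ⟨hh, ?_⟩
  intro N k
  set d := p.totalDegree with hd
  obtain ⟨v, hv⟩ := exists_lead_ne_zero p hp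
  set a := MvPolynomial.eval v (MvPolynomial.homogeneousComponent d p) with ha
  set R : ℝ := 3 ^ d with hRdef
  have hR1 : (1:ℝ) ≤ R := one_le_pow₀ (by norm_num)
  obtain ⟨C, hC⟩ := hfb N (k + R * ‖v‖)
  set C' := max C 0 with hC'def
  set K : ℝ := (1 + R * ‖v‖) ^ N with hKdef
  have hK0 : 0 < K := by positivity
  refine ⟨C' * K / ‖a‖, ?_⟩
  intro l hl
  have hl1 : (0:ℝ) < (1 + ‖l‖) ^ N := by positivity
  set q := (MvPolynomial.aeval (lineMap' l v)) p with hqdef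
  have hqc : q.coeff d = a := Q_coeff_top p l v
  have hdeg : q.natDegree = d :=
    le_antisymm (Q_natDegree_le p l v) (Polynomial.le_natDegree_of_ne_zero (hqc ▸ hv))
  have hq0 : q ≠ 0 := fun e => hv (by rw [← hqc, e, Polynomial.coeff_zero])
  have hlc : q.leadingCoeff = a := by rw [Polynomial.leadingCoeff, hdeg, hqc]
  have hcard : Multiset.card q.roots = d := by rw [Q_roots_card, hdeg]
  set A : ℂ → (Fin n → ℂ) := fun t => l + t • v with hAdef
  have hAid : ∀ t : ℂ, A t = fun i => l i + t * v i := by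
    intro t; funext i; simp [hAdef]
  have hAdiff : Differentiable ℂ A :=
    (differentiable_const l).add (differentiable_id.smul_const v)
  set G : ℂ → ℂ := fun t => a * h (A t) with hGdef
  set F : ℂ → ℂ := fun t => f (A t) with hFdef
  have hGdiff : Differentiable ℂ G := ((hh.comp hAdiff).const_mul a)
  have hFG : ∀ t, F t = (q.roots.map (fun w => t - w)).prod * G t := by
    intro t
    have h1 : MvPolynomial.eval (A t) p = q.eval t := by
      rw [Q_eval p l v t, hAid t]
    rw [hFdef]
    simp only
    rw [hdiv (A t), h1, Q_factor q hq0 t, hlc, hGdef]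
    ring
  have hM : ∀ ζ : ℂ, ‖ζ‖ ≤ 3 ^ Multiset.card q.roots * 1 →
      ‖F ζ‖ ≤ C' * K / (1 + ‖l‖) ^ N := by
    intro ζ hζ
    rw [hcard, mul_one] at hζ
    have hζv : ‖ζ • v‖ ≤ R * ‖v‖ := by
      rw [norm_smul]
      exact mul_le_mul_of_nonneg_right hζ (norm_nonneg v)
    have hre : ‖reOf (A ζ)‖ ≤ k + R * ‖v‖ := by
      have : reOf (A ζ) = reOf l + reOf (ζ • v) := by
        funext i; simp [reOf, hAdef]
      rw [this]
      calc ‖reOf l + reOf (ζ • v)‖ ≤ ‖reOf l‖ + ‖reOf (ζ • v)‖ := norm_add_le _ _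
      _ ≤ k + R * ‖v‖ := add_le_add hl ((norm_reOf_le _).trans hζv)
    have hfA := (hC (A ζ) hre).trans (le_max_left C 0)
    have hnl : 1 + ‖l‖ ≤ (1 + ‖A ζ‖) * (1 + R * ‖v‖) := by
      have h2 : ‖l‖ ≤ ‖A ζ‖ + R * ‖v‖ := by
        calc ‖l‖ = ‖A ζ - ζ • v‖ := by rw [hAdef]; simp
        _ ≤ ‖A ζ‖ + ‖ζ • v‖ := norm_sub_le _ _
        _ ≤ ‖A ζ‖ + R * ‖v‖ := add_le_add_right hζv _
      have h3 : 0 ≤ ‖A ζ‖ * (R * ‖v‖) := by positivity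
      nlinarith
    have hpow : (1 + ‖l‖) ^ N ≤ (1 + ‖A ζ‖) ^ N * K := by
      rw [hKdef, ← mul_pow]
      exact pow_le_pow_left₀ (by positivity) hnl N
    rw [hFdef]
    simp only
    rw [le_div_iff₀ hl1]
    calc ‖f (A ζ)‖ * (1 + ‖l‖) ^ N ≤ ‖f (A ζ)‖ * ((1 + ‖A ζ‖) ^ N * K) := by
          apply mul_le_mul_of_nonneg_left hpow (norm_nonneg _)
    _ = ((1 + ‖A ζ‖) ^ N * ‖f (A ζ)‖) * K := by ring
    _ ≤ C' * K := mul_le_mul_of_nonneg_right hfA hK0.le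
  have hdb := div_bound_multiset q.roots F G hGdiff hFG 1 (C' * K / (1 + ‖l‖) ^ N)
    one_pos hM 0 (by simp)
  rw [one_pow, div_one] at hdb
  have hA0 : A 0 = l := by
    funext i; simp [hAdef]
  have hG0 : G 0 = a * h l := by
    rw [hGdef]; simp only; rw [hA0]
  rw [hG0, norm_mul] at hdb
  have hapos : (0:ℝ) < ‖a‖ := norm_pos_iff.mpr hv
  rw [le_div_iff₀ hapos]
  have := mul_le_mul_of_nonneg_left hdb hl1.le
  calc (1 + ‖l‖) ^ N * ‖h l‖ * ‖a‖ = (1 + ‖l‖) ^ N * (‖a‖ * ‖h l‖) := by ring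
  _ ≤ (1 + ‖l‖) ^ N * (C' * K / (1 + ‖l‖) ^ N) := this
  _ = C' * K := by field_simp
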